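/- Let p ∈ (0,1) be fixed. For every ε > 0 there exist σ > 0 and k₀ > 0 such that for all integers k > k₀ and all integers l with 0 ≤ l ≤ σ·k/log k, we have ∑_{i=0}^{l-1} C(k,i) · p^{k-i} · (1-p)^i ≤ p^{k(1-ε)}. -/

import Mathlib

open Real Finset

/-- Lower tail estimate for the binomial distribution: for fixed `p ∈ (0,1)` and any `ε > 0`
there are `σ > 0` and `k₀` such that for all `k > k₀` and all `l ≤ σ k / log k`,
`∑_{i=0}^{l-1} C(k,i) p^{k-i} (1-p)^i ≤ p^{k(1-ε)}`. -/
theorem binomial_tail_claim (p : ℝ) (hp : p ∈ Set.Ioo (0:ℝ) 1) (ε : ℝ) (hε : 0 < ε) :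
    ∃ σ : ℝ, 0 < σ ∧ ∃ k₀ : ℕ, 0 < k₀ ∧
      ∀ k : ℕ, k₀ < k → ∀ l : ℕ, (l : ℝ) ≤ σ * k / Real.log k →
        ∑ i ∈ Finset.range l, (k.choose i : ℝ) * p ^ (k - i) * (1 - p) ^ i ≤
          p ^ ((k : ℝ) * (1 - ε)) := by
  obtain ⟨hp0, hp1⟩ := hp
  set L : ℝ := -Real.log p with hLdef
  have hLpos : 0 < L := by
    have := Real.log_neg hp0 hp1
    simp only [hLdef]; linarith
  set σ : ℝ := ε * L / (2 + L) with hσdef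
  have hσpos : 0 < σ := by positivity
  refine ⟨σ, hσpos, ⟨⌈Real.exp (σ + 1)⌉₊ + 3, by positivity, ?_⟩⟩
  intro k hk l hl
  have hk3 : 3 ≤ k := by omega
  have hkR : (1:ℝ) ≤ (k:ℝ) := by exact_mod_cast (by omega : 1 ≤ k)
  have hkpos : (0:ℝ) < k := by linarith
  have hlogk : σ + 1 ≤ Real.log k := by
    have h1 : Real.exp (σ + 1) ≤ (k:ℝ) := by
      calc Real.exp (σ+1) ≤ (⌈Real.exp (σ+1)⌉₊ : ℝ) := Nat.le_ceil _
        _ ≤ (k:ℝ) := by exact_mod_cast (by omega : ⌈Real.exp (σ+1)⌉₊ ≤ k)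
    calc σ + 1 = Real.log (Real.exp (σ+1)) := (Real.log_exp _).symm
      _ ≤ Real.log k := Real.log_le_log (Real.exp_pos _) h1
  have hlogk1 : 1 ≤ Real.log k := by linarith
  have hlogkpos : 0 < Real.log k := by linarith
  rcases Nat.eq_zero_or_pos l with rfl | hl1
  · simp only [Finset.range_zero, Finset.sum_empty]
    positivity
  have hlR : (1:ℝ) ≤ (l:ℝ) := by exact_mod_cast hl1
  -- l ≤ σ k and l ≤ k
  have h2 : (l:ℝ) * Real.log k ≤ σ * k := (le_div_iff₀ hlogkpos).mp hl
  have hlσk : (l:ℝ) ≤ σ * k := by nlinarith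
  have hlk : (l:ℝ) ≤ (k:ℝ) := by
    have hσlog : σ ≤ Real.log k := by linarith
    nlinarith
  have hlkn : l ≤ k := by exact_mod_cast hlk
  -- term-by-term bound
  have hterm : ∀ i ∈ Finset.range l,
      (k.choose i : ℝ) * p ^ (k - i) * (1 - p) ^ i ≤ (k:ℝ)^l * p ^ (k - l) := by
    intro i hi
    rw [Finset.mem_range] at hi
    have h1 : (k.choose i : ℝ) ≤ (k:ℝ)^i := by exact_mod_cast Nat.choose_le_pow k i
    have h2' : (k:ℝ)^i ≤ (k:ℝ)^l :=
      pow_le_pow_right₀ hkR (le_of_lt hi)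
    have h3 : p ^ (k - i) ≤ p ^ (k - l) :=
      pow_le_pow_of_le_one hp0.le hp1.le (Nat.sub_le_sub_left (le_of_lt hi) k)
    have h4 : (1 - p) ^ i ≤ 1 := pow_le_one₀ (by linarith) (by linarith)
    have hc : (0:ℝ) ≤ (k.choose i : ℝ) := Nat.cast_nonneg _
    calc (k.choose i : ℝ) * p ^ (k - i) * (1 - p) ^ i
        ≤ (k.choose i : ℝ) * p ^ (k - i) * 1 := by
          apply mul_le_mul_of_nonneg_left h4 (by positivity)
      _ = (k.choose i : ℝ) * p ^ (k - i) := by ring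
      _ ≤ (k:ℝ)^l * p ^ (k - l) := by
          apply mul_le_mul (h1.trans h2') h3 (by positivity) (by positivity)
  have hsum : ∑ i ∈ Finset.range l, (k.choose i : ℝ) * p ^ (k - i) * (1 - p) ^ i
      ≤ (l:ℝ) * ((k:ℝ)^l * p ^ (k - l)) := by
    calc ∑ i ∈ Finset.range l, (k.choose i : ℝ) * p ^ (k - i) * (1 - p) ^ i
        ≤ ∑ _i ∈ Finset.range l, (k:ℝ)^l * p ^ (k - l) := Finset.sum_le_sum hterm
      _ = (l:ℝ) * ((k:ℝ)^l * p ^ (k - l)) := by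
          rw [Finset.sum_const, Finset.card_range, nsmul_eq_mul]
  refine hsum.trans ?_
  -- compare via logs
  have hA : (0:ℝ) < (l:ℝ) * ((k:ℝ)^l * p ^ (k - l)) := by positivity
  have hB : (0:ℝ) < p ^ ((k : ℝ) * (1 - ε)) := Real.rpow_pos_of_pos hp0 _
  rw [← Real.exp_log hA, ← Real.exp_log hB]
  apply Real.exp_le_exp.mpr
  rw [Real.log_rpow hp0, Real.log_mul (by positivity) (by positivity),
    Real.log_mul (by positivity) (by positivity), Real.log_pow, Real.log_pow]
  have hcast : ((k - l : ℕ) : ℝ) = (k:ℝ) - (l:ℝ) := by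
    exact Nat.cast_sub hlkn
  rw [hcast]
  have hlogl : Real.log l ≤ (l:ℝ) - 1 := Real.log_le_sub_one_of_pos (by linarith)
  have h3 : (l:ℝ) * L ≤ σ * (k:ℝ) * L := by nlinarith
  have h4 : σ * (2 + L) * (k:ℝ) = ε * L * (k:ℝ) := by
    have : σ * (2 + L) = ε * L := by
      rw [hσdef, div_mul_cancel₀ _ (ne_of_gt (by linarith))]
    linear_combination (k:ℝ) * this
  have hlogp : Real.log p = -L := by simp [hLdef]
  rw [hlogp]
  nlinarith [hlogl, h2, h3, h4]
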